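/- Shannon entropy decomposition: assume all the integrals below exist, and for c ∈ ℝ write S₁(𝟙{W ≤ c}·W) = −∫_{−∞}^{c} g(w)·log g(w) dw. Then the Shannon entropy S₁(X) = −∫_ℝ f(x; θ)·log f(x; θ) dx of X ~ TD(θ) equals log(Z_θ) − ((ρ+δ)σ/Z_θ)·E[log(ρ + δ·T(W; α, p))] − (δσ/Z_θ)·{ E[𝟙{W ≤ −α√Y}·log(ρ + δ·T(W; α, p))] − E[𝟙{W ≤ α√Y}·log(ρ + δ·T(W; α, p))] } + ((ρ+δ)σ/Z_θ)·S₁(W) + (δσ/Z_θ)·{ E[S₁(𝟙{W ≤ −α√Y}·W)] − E[S₁(𝟙{W ≤ α√Y}·W)] }, where S₁(W) = −∫_ℝ g(w)·log g(w) dw and E[S₁(𝟙{W ≤ ±α√Y}·W)] = ∫₀^∞ S₁(𝟙{W ≤ ±α√y}·W)·y^{p−1}e^{−y}/Γ(p) dy. -/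

import Mathlib

open MeasureTheory Real Set Filter

noncomputable def lincGamma (p u : ℝ) : ℝ := ∫ w in (0:ℝ)..u, w ^ (p - 1) * Real.exp (-w)

noncomputable def Tfun (p α x : ℝ) : ℝ := lincGamma p (x ^ 2 / α ^ 2) / Real.Gamma p

noncomputable def gammaPDF (p y : ℝ) : ℝ := y ^ (p - 1) * Real.exp (-y) / Real.Gamma p

noncomputable def Znorm (p σ α ρ δ : ℝ) (g : ℝ → ℝ) : ℝ :=
  σ * ∫ w : ℝ, (ρ + δ * Tfun p α w) * g w

noncomputable def tdPDF (p μ σ α ρ δ : ℝ) (g : ℝ → ℝ) (x : ℝ) : ℝ :=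
  (1 / Znorm p σ α ρ δ g) * (ρ + δ * Tfun p α ((x - μ) / σ)) * g ((x - μ) / σ)

noncomputable def cdfOf (d : ℝ → ℝ) (x : ℝ) : ℝ := ∫ t in Iic x, d t

variable {p : ℝ}

lemma gkern_intOn (hp : 0 < p) : IntegrableOn (fun w : ℝ => w ^ (p-1) * Real.exp (-w)) (Ioi 0) := by
  have := Real.GammaIntegral_convergent hp
  simpa [mul_comm] using this

lemma gkern_intOn_Ioc (hp : 0 < p) (u : ℝ) :
    IntegrableOn (fun w : ℝ => w ^ (p-1) * Real.exp (-w)) (Ioc 0 u) :=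
  (gkern_intOn hp).mono_set Ioc_subset_Ioi_self

lemma lincGamma_eq (hp : 0 < p) {u : ℝ} (hu : 0 ≤ u) :
    lincGamma p u = ∫ w in Ioc (0:ℝ) u, w ^ (p-1) * Real.exp (-w) := by
  rw [lincGamma, intervalIntegral.integral_of_le hu]

lemma lincGamma_nonneg (hp : 0 < p) {u : ℝ} (hu : 0 ≤ u) : 0 ≤ lincGamma p u := by
  rw [lincGamma_eq hp hu]
  refine setIntegral_nonneg measurableSet_Ioc fun w hw => ?_
  exact mul_nonneg (Real.rpow_nonneg hw.1.le _) (Real.exp_pos _).le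

lemma lincGamma_pos (hp : 0 < p) {u : ℝ} (hu : 0 < u) : 0 < lincGamma p u := by
  rw [lincGamma]
  refine intervalIntegral.intervalIntegral_pos_of_pos_on ?_ (fun w hw => ?_) hu
  · rw [intervalIntegrable_iff_integrableOn_Ioc_of_le hu.le]
    exact gkern_intOn_Ioc hp u
  · exact mul_pos (Real.rpow_pos_of_pos hw.1 _) (Real.exp_pos _)

lemma lincGamma_le (hp : 0 < p) {u : ℝ} (hu : 0 ≤ u) : lincGamma p u ≤ Real.Gamma p := by
  rw [lincGamma_eq hp hu, Real.Gamma_eq_integral hp]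
  simp_rw [mul_comm (Real.exp _)]
  refine setIntegral_mono_set (gkern_intOn hp) ?_ (HasSubset.Subset.eventuallyLE Ioc_subset_Ioi_self)
  filter_upwards [self_mem_ae_restrict measurableSet_Ioi] with w hw
  exact mul_nonneg (Real.rpow_nonneg (le_of_lt hw) _) (Real.exp_pos _).le

lemma lincGamma_mono (hp : 0 < p) : MonotoneOn (lincGamma p) (Ici 0) := by
  intro u hu v hv huv
  rw [lincGamma_eq hp hu, lincGamma_eq hp hv]
  refine setIntegral_mono_set (gkern_intOn_Ioc hp v) ?_
    (HasSubset.Subset.eventuallyLE (Ioc_subset_Ioc_right huv))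
  filter_upwards [self_mem_ae_restrict measurableSet_Ioc] with w hw
  exact mul_nonneg (Real.rpow_nonneg hw.1.le _) (Real.exp_pos _).le

lemma Tfun_nonneg (hp : 0 < p) (α x : ℝ) : 0 ≤ Tfun p α x :=
  div_nonneg (lincGamma_nonneg hp (div_nonneg (sq_nonneg x) (sq_nonneg α))) (Real.Gamma_pos_of_pos hp).le

lemma Tfun_le_one (hp : 0 < p) (α x : ℝ) : Tfun p α x ≤ 1 := by
  rw [Tfun, div_le_one (Real.Gamma_pos_of_pos hp)]
  exact lincGamma_le hp (div_nonneg (sq_nonneg x) (sq_nonneg α))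

lemma Tfun_pos (hp : 0 < p) {α x : ℝ} (hα : 0 < α) (hx : x ≠ 0) : 0 < Tfun p α x := by
  apply div_pos _ (Real.Gamma_pos_of_pos hp)
  exact lincGamma_pos hp (div_pos (by positivity) (by positivity))

lemma Tfun_measurable (hp : 0 < p) {α : ℝ} (hα : 0 < α) : Measurable (Tfun p α) := by
  have h1 : Monotone (fun u : ℝ => lincGamma p (max u 0)) := by
    intro u v huv
    exact lincGamma_mono hp (mem_Ici.2 (le_max_right _ _)) (mem_Ici.2 (le_max_right _ _))
      (max_le_max huv le_rfl)
  have h2 : Tfun p α = fun x => lincGamma p (max (x ^ 2 / α ^ 2) 0) / Real.Gamma p := by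
    funext x
    rw [Tfun, max_eq_left (div_nonneg (sq_nonneg x) (sq_nonneg α))]
  rw [h2]
  exact (h1.measurable.comp (by measurability)).div_const _

lemma gammaPDF_nonneg (hp : 0 < p) {y : ℝ} (hy : 0 < y) : 0 ≤ gammaPDF p y :=
  div_nonneg (mul_nonneg (Real.rpow_nonneg hy.le _) (Real.exp_pos _).le) (Real.Gamma_pos_of_pos hp).le

lemma gammaPDF_intOn (hp : 0 < p) : IntegrableOn (gammaPDF p) (Ioi 0) := by
  unfold gammaPDF
  exact (gkern_intOn hp).div_const _

lemma gammaPDF_integral (hp : 0 < p) : ∫ y in Ioi (0:ℝ), gammaPDF p y = 1 := by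
  unfold gammaPDF
  rw [integral_div]
  rw [div_eq_one_iff_eq (Real.Gamma_pos_of_pos hp).ne']
  rw [Real.Gamma_eq_integral hp]
  simp_rw [mul_comm]

lemma gammaPDF_integral_Ioc (hp : 0 < p) {u : ℝ} (hu : 0 ≤ u) :
    ∫ y in Ioc (0:ℝ) u, gammaPDF p y = lincGamma p u / Real.Gamma p := by
  unfold gammaPDF
  rw [integral_div, lincGamma_eq hp hu]

lemma Tfun_rep (hp : 0 < p) {α : ℝ} (hα : 0 < α) (w : ℝ) :
    Tfun p α w = ∫ y in Ioi (0:ℝ), (Iic (w ^ 2 / α ^ 2)).indicator (gammaPDF p) y := by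
  rw [integral_indicator measurableSet_Iic, Measure.restrict_restrict measurableSet_Iic,
    Iic_inter_Ioi]
  rw [gammaPDF_integral_Ioc hp (div_nonneg (sq_nonneg w) (sq_nonneg α)), Tfun]

lemma gammaPDF_measurable : Measurable (gammaPDF p) := by
  unfold gammaPDF
  exact ((measurable_id.pow_const _).mul (measurable_id.neg.exp)).div_const _

lemma indicator_set_eq (hα : 0 < (α:ℝ)) {y : ℝ} (hy : 0 < y) (w : ℝ) :
    (y ≤ w ^ 2 / α ^ 2) ↔ w ∈ Iic (-(α * Real.sqrt y)) ∪ Ici (α * Real.sqrt y) := by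
  have ha : 0 ≤ α * Real.sqrt y := by positivity
  have h1 : y ≤ w ^ 2 / α ^ 2 ↔ (α * Real.sqrt y) ^ 2 ≤ w ^ 2 := by
    rw [le_div_iff₀ (by positivity)]
    rw [mul_pow, Real.sq_sqrt hy.le]
    constructor <;> intro h <;> linarith
  have h2 : (α * Real.sqrt y) ^ 2 ≤ w ^ 2 ↔ α * Real.sqrt y ≤ |w| := by
    rw [← sq_abs w]
    exact pow_le_pow_iff_left₀ ha (abs_nonneg w) two_ne_zero
  rw [h1, h2, le_abs]
  simp only [mem_union, mem_Iic, mem_Ici]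
  constructor
  · rintro (h | h)
    · exact Or.inr h
    · exact Or.inl (by linarith)
  · rintro (h | h)
    · exact Or.inr (by linarith)
    · exact Or.inl h

lemma key_fubini (hp : 0 < p) {α : ℝ} (hα : 0 < α) (q : ℝ → ℝ)
    (hqm : Measurable q) (hqi : Integrable q)
    (hA : IntegrableOn (fun y : ℝ => (∫ w in Iic (-(α * Real.sqrt y)), q w) * gammaPDF p y) (Ioi 0))
    (hB : IntegrableOn (fun y : ℝ => (∫ w in Iic (α * Real.sqrt y), q w) * gammaPDF p y) (Ioi 0)) :
    ∫ w : ℝ, Tfun p α w * q w =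
      (∫ y in Ioi (0:ℝ), (∫ w in Iic (-(α * Real.sqrt y)), q w) * gammaPDF p y)
      + (∫ w : ℝ, q w)
      - ∫ y in Ioi (0:ℝ), (∫ w in Iic (α * Real.sqrt y), q w) * gammaPDF p y := by
  set ν := volume.restrict (Ioi (0:ℝ)) with hν
  set F : ℝ → ℝ → ℝ := fun w y => (Iic (w ^ 2 / α ^ 2)).indicator (gammaPDF p) y * q w with hF
  have hFm : Measurable (Function.uncurry F) := by
    have hS : MeasurableSet {z : ℝ × ℝ | z.2 ≤ z.1 ^ 2 / α ^ 2} :=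
      measurableSet_le measurable_snd ((measurable_fst.pow_const 2).div_const _)
    have : Function.uncurry F = fun z : ℝ × ℝ =>
        ({z : ℝ × ℝ | z.2 ≤ z.1 ^ 2 / α ^ 2}).indicator (fun z => gammaPDF p z.2) z * q z.1 := by
      funext z
      simp only [Function.uncurry, hF, indicator, mem_Iic, mem_setOf_eq]
    rw [this]
    exact ((gammaPDF_measurable.comp measurable_snd).indicator hS).mul (hqm.comp measurable_fst)
  have hint_y : ∀ w : ℝ, Integrable (fun y => F w y) ν := by
    intro w
    exact (((gammaPDF_intOn hp).indicator measurableSet_Iic)).mul_const _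
  have hFI : Integrable (Function.uncurry F) (volume.prod ν) := by
    rw [integrable_prod_iff hFm.aestronglyMeasurable]
    constructor
    · exact Eventually.of_forall hint_y
    · have hbound : ∀ w : ℝ, ∫ y, ‖F w y‖ ∂ν ≤ (∫ y, ‖gammaPDF p y‖ ∂ν) * ‖q w‖ := by
        intro w
        rw [← integral_mul_const _]
        refine integral_mono_of_nonneg (Eventually.of_forall fun y => norm_nonneg _)
          ((gammaPDF_intOn hp).norm.mul_const _) (Eventually.of_forall fun y => ?_)
        simp only [hF, norm_mul]
        gcongr
        exact norm_indicator_le_norm_self _ _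
      have hmeas : AEStronglyMeasurable (fun w => ∫ y, ‖F w y‖ ∂ν) volume := by
        have : StronglyMeasurable fun z : ℝ × ℝ => ‖Function.uncurry F z‖ :=
          hFm.norm.stronglyMeasurable
        exact (this.integral_prod_right').aestronglyMeasurable
      refine Integrable.mono (hqi.norm.const_mul (∫ y, ‖gammaPDF p y‖ ∂ν)) hmeas
        (Eventually.of_forall fun w => ?_)
      rw [Real.norm_of_nonneg (integral_nonneg fun y => norm_nonneg _)]
      exact (hbound w).trans (le_abs_self _)
  have step1 : ∀ w : ℝ, ∫ y, F w y ∂ν = Tfun p α w * q w := by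
    intro w
    rw [hν, hF]
    simp only
    rw [integral_mul_const _, ← Tfun_rep hp hα w]
  have step3 : ∀ y ∈ Ioi (0:ℝ), (∫ w : ℝ, F w y) =
      ((∫ w in Iic (-(α * Real.sqrt y)), q w)
        + ((∫ w : ℝ, q w) - ∫ w in Iic (α * Real.sqrt y), q w)) * gammaPDF p y := by
    intro y hy
    have hy' : 0 < y := hy
    set a := α * Real.sqrt y with haa
    have ha : 0 < a := by positivity
    have hpt : ∀ w : ℝ, F w y = gammaPDF p y * (Iic (-a) ∪ Ici a).indicator q w := by
      intro w
      simp only [hF, indicator, mem_Iic]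
      by_cases h : y ≤ w ^ 2 / α ^ 2
      · rw [if_pos h, if_pos ((indicator_set_eq hα hy' w).1 h), mul_comm]
      · rw [if_neg h, if_neg (fun hw => h ((indicator_set_eq hα hy' w).2 hw)), zero_mul, mul_zero]
    simp_rw [hpt]
    rw [integral_const_mul _, integral_indicator ((measurableSet_Iic).union measurableSet_Ici)]
    have hdisj : Disjoint (Iic (-a)) (Ici a) := by
      rw [Iic_disjoint_Ici]
      exact not_le.2 (by linarith)
    rw [setIntegral_union hdisj measurableSet_Ici hqi.integrableOn hqi.integrableOn]
    have hcompl : ∫ w in Ici a, q w = (∫ w : ℝ, q w) - ∫ w in Iic a, q w := by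
      have h1 := integral_add_compl (measurableSet_Iio (a := a)) hqi (f := q)
      rw [compl_Iio] at h1
      rw [← h1, integral_Iic_eq_integral_Iio]
      ring
    rw [hcompl]
    ring
  calc ∫ w : ℝ, Tfun p α w * q w = ∫ w : ℝ, ∫ y, F w y ∂ν := by simp_rw [step1]
    _ = ∫ y, ∫ w : ℝ, F w y ∂volume ∂ν := integral_integral_swap hFI
    _ = ∫ y in Ioi (0:ℝ),
          ((∫ w in Iic (-(α * Real.sqrt y)), q w)
            + ((∫ w : ℝ, q w) - ∫ w in Iic (α * Real.sqrt y), q w)) * gammaPDF p y := by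
        rw [hν]
        exact setIntegral_congr_fun measurableSet_Ioi step3
    _ = (∫ y in Ioi (0:ℝ), (∫ w in Iic (-(α * Real.sqrt y)), q w) * gammaPDF p y)
        + (∫ w : ℝ, q w) - ∫ y in Ioi (0:ℝ), (∫ w in Iic (α * Real.sqrt y), q w) * gammaPDF p y := by
        have hC : IntegrableOn (fun y : ℝ => (∫ w : ℝ, q w) * gammaPDF p y) (Ioi 0) :=
          (gammaPDF_intOn hp).const_mul _
        have h23 : IntegrableOn (fun y : ℝ => (∫ w : ℝ, q w) * gammaPDF p y
            - (∫ w in Iic (α * Real.sqrt y), q w) * gammaPDF p y) (Ioi 0) := hC.sub hB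
        simp_rw [add_mul, sub_mul]
        rw [integral_add hA h23, integral_sub hC hB, integral_const_mul _,
          gammaPDF_integral hp, mul_one]
        ring

section main

variable {μ σ α ρ δ : ℝ} {g : ℝ → ℝ}

lemma h_nonneg (hp : 0 < p) (hρ : 0 ≤ ρ) (hδ : 0 ≤ δ) (α w : ℝ) :
    0 ≤ ρ + δ * Tfun p α w :=
  add_nonneg hρ (mul_nonneg hδ (Tfun_nonneg hp α w))

lemma h_le (hp : 0 < p) (hρ : 0 ≤ ρ) (hδ : 0 ≤ δ) (α w : ℝ) :
    ρ + δ * Tfun p α w ≤ ρ + δ :=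
  add_le_add le_rfl (by
    calc δ * Tfun p α w ≤ δ * 1 := by gcongr; exact Tfun_le_one hp α w
    _ = δ := mul_one δ)

lemma h_pos (hp : 0 < p) (hα : 0 < α) (hρ : 0 ≤ ρ) (hδ : 0 ≤ δ) (hρδ : 0 < ρ + δ)
    {w : ℝ} (hw : w ≠ 0) : 0 < ρ + δ * Tfun p α w := by
  rcases eq_or_lt_of_le hρ with hρ0 | hρ0
  · have hδ0 : 0 < δ := by linarith [hρ0]
    have := Tfun_pos hp hα hw
    nlinarith
  · have := mul_nonneg hδ (Tfun_nonneg hp α w)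
    linarith

/-- Integrability of `T·q` for integrable `q`. -/
lemma Tq_integrable (hp : 0 < p) (hα : 0 < α) {q : ℝ → ℝ}
    (hqm : Measurable q) (hqi : Integrable q) :
    Integrable (fun w : ℝ => Tfun p α w * q w) := by
  refine Integrable.mono hqi ((Tfun_measurable hp hα).mul hqm).aestronglyMeasurable
    (Eventually.of_forall fun w => ?_)
  rw [Real.norm_eq_abs, Real.norm_eq_abs, abs_mul]
  calc |Tfun p α w| * |q w| ≤ 1 * |q w| := by
        gcongr
        rw [abs_of_nonneg (Tfun_nonneg hp α w)]
        exact Tfun_le_one hp α w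
    _ = |q w| := one_mul _

lemma hq_integrable (hp : 0 < p) (hα : 0 < α) (hρ : 0 ≤ ρ) (hδ : 0 ≤ δ) {q : ℝ → ℝ}
    (hqm : Measurable q) (hqi : Integrable q) :
    Integrable (fun w : ℝ => (ρ + δ * Tfun p α w) * q w) := by
  have : (fun w : ℝ => (ρ + δ * Tfun p α w) * q w)
      = fun w => ρ * q w + δ * (Tfun p α w * q w) := by
    funext w; ring
  rw [this]
  exact ((hqi.const_mul ρ)).add ((Tq_integrable hp hα hqm hqi).const_mul δ)

lemma int_hg_pos (hp : 0 < p) (hα : 0 < α) (hρ : 0 ≤ ρ) (hδ : 0 ≤ δ) (hρδ : 0 < ρ + δ)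
    (hg0 : ∀ x, 0 ≤ g x) (hgm : Measurable g) (hgi : Integrable g)
    (hg1 : (∫ x : ℝ, g x) = 1) :
    0 < ∫ w : ℝ, (ρ + δ * Tfun p α w) * g w := by
  have hint : Integrable (fun w : ℝ => (ρ + δ * Tfun p α w) * g w) :=
    hq_integrable hp hα hρ hδ hgm hgi
  rw [integral_pos_iff_support_of_nonneg
    (fun w => mul_nonneg (h_nonneg hp hρ hδ α w) (hg0 w)) hint]
  have hsupg : 0 < volume (Function.support g) := by
    have := (integral_pos_iff_support_of_nonneg hg0 hgi).1 (by rw [hg1]; norm_num)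
    exact this
  have hsub : Function.support g \ {0} ⊆ Function.support
      (fun w : ℝ => (ρ + δ * Tfun p α w) * g w) := by
    intro w hw
    have hw0 : w ≠ 0 := fun h => hw.2 (by simp [h])
    have hgw : g w ≠ 0 := hw.1
    exact mul_ne_zero (h_pos hp hα hρ hδ hρδ hw0).ne' hgw
  have h1 : volume (Function.support g) - volume ({(0:ℝ)} : Set ℝ)
      ≤ volume (Function.support g \ {0}) := le_measure_diff
  rw [Real.volume_singleton, tsub_zero] at h1
  exact lt_of_lt_of_le (lt_of_lt_of_le hsupg h1) (measure_mono hsub)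

end main

/-- Shannon entropy decomposition for the trimodal distribution. -/
theorem stmt11 (p μ σ α ρ δ : ℝ) (hp : 0 < p) (hσ : 0 < σ) (hα : 0 < α)
    (hρ : 0 ≤ ρ) (hδ : 0 ≤ δ) (hρδ : 0 < ρ + δ)
    (g : ℝ → ℝ) (hg0 : ∀ x, 0 ≤ g x) (hgm : Measurable g)
    (hgi : Integrable g) (hg1 : (∫ x : ℝ, g x) = 1)
    (hint1 : Integrable (fun x : ℝ =>
        tdPDF p μ σ α ρ δ g x * Real.log (tdPDF p μ σ α ρ δ g x)))
    (hint2 : Integrable (fun w : ℝ => Real.log (ρ + δ * Tfun p α w) * g w))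
    (hint3 : Integrable (fun w : ℝ => g w * Real.log (g w)))
    (hint4 : IntegrableOn (fun y : ℝ =>
        (∫ w in Iic (-α * Real.sqrt y), Real.log (ρ + δ * Tfun p α w) * g w)
          * gammaPDF p y) (Ioi 0))
    (hint5 : IntegrableOn (fun y : ℝ =>
        (∫ w in Iic (α * Real.sqrt y), Real.log (ρ + δ * Tfun p α w) * g w)
          * gammaPDF p y) (Ioi 0))
    (hint6 : IntegrableOn (fun y : ℝ =>
        (-∫ w in Iic (-α * Real.sqrt y), g w * Real.log (g w)) * gammaPDF p y) (Ioi 0))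
    (hint7 : IntegrableOn (fun y : ℝ =>
        (-∫ w in Iic (α * Real.sqrt y), g w * Real.log (g w)) * gammaPDF p y) (Ioi 0)) :
    (-∫ x : ℝ, tdPDF p μ σ α ρ δ g x * Real.log (tdPDF p μ σ α ρ δ g x))
      = Real.log (Znorm p σ α ρ δ g)
        - ((ρ + δ) * σ / Znorm p σ α ρ δ g)
            * (∫ w : ℝ, Real.log (ρ + δ * Tfun p α w) * g w)
        - (δ * σ / Znorm p σ α ρ δ g) *
            ((∫ y in Ioi (0:ℝ),
                (∫ w in Iic (-α * Real.sqrt y), Real.log (ρ + δ * Tfun p α w) * g w)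
                  * gammaPDF p y)
              - (∫ y in Ioi (0:ℝ),
                  (∫ w in Iic (α * Real.sqrt y), Real.log (ρ + δ * Tfun p α w) * g w)
                    * gammaPDF p y))
        + ((ρ + δ) * σ / Znorm p σ α ρ δ g)
            * (-∫ w : ℝ, g w * Real.log (g w))
        + (δ * σ / Znorm p σ α ρ δ g) *
            ((∫ y in Ioi (0:ℝ),
                (-∫ w in Iic (-α * Real.sqrt y), g w * Real.log (g w)) * gammaPDF p y)
              - (∫ y in Ioi (0:ℝ),
                  (-∫ w in Iic (α * Real.sqrt y), g w * Real.log (g w)) * gammaPDF p y)) := by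
  have hσ0 : σ ≠ 0 := hσ.ne'
  set Z := Znorm p σ α ρ δ g with hZdef
  set T : ℝ → ℝ := Tfun p α with hT
  set h : ℝ → ℝ := fun w => ρ + δ * T w with hh
  set q₁ : ℝ → ℝ := fun w => Real.log (h w) * g w with hq₁
  set q₂ : ℝ → ℝ := fun w => g w * Real.log (g w) with hq₂
  have hIpos : 0 < ∫ w : ℝ, h w * g w :=
    int_hg_pos hp hα hρ hδ hρδ hg0 hgm hgi hg1
  have hZpos : 0 < Z := mul_pos hσ hIpos
  have hZ0 : Z ≠ 0 := hZpos.ne'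
  have hIZ : (∫ w : ℝ, h w * g w) = Z / σ := by
    rw [hZdef, Znorm]; field_simp; rfl
  -- measurability
  have hTm : Measurable T := Tfun_measurable hp hα
  have hhm : Measurable h := measurable_const.add (hTm.const_mul δ)
  have hq₁m : Measurable q₁ := (Real.measurable_log.comp hhm).mul hgm
  have hq₂m : Measurable q₂ := hgm.mul (Real.measurable_log.comp hgm)
  have hq₁i : Integrable q₁ := hint2
  have hq₂i : Integrable q₂ := hint3
  -- integrability of products
  have hhgi : Integrable (fun w => h w * g w) := hq_integrable hp hα hρ hδ hgm hgi
  have hhq₁i : Integrable (fun w => h w * q₁ w) := hq_integrable hp hα hρ hδ hq₁m hq₁i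
  have hhq₂i : Integrable (fun w => h w * q₂ w) := hq_integrable hp hα hρ hδ hq₂m hq₂i
  -- Fubini hypotheses in the normalized `-(α*√y)` form
  have h4 : IntegrableOn (fun y : ℝ =>
      (∫ w in Iic (-(α * Real.sqrt y)), q₁ w) * gammaPDF p y) (Ioi 0) := by
    simpa [neg_mul] using hint4
  have h5 : IntegrableOn (fun y : ℝ =>
      (∫ w in Iic (α * Real.sqrt y), q₁ w) * gammaPDF p y) (Ioi 0) := hint5
  have h6 : IntegrableOn (fun y : ℝ =>
      (∫ w in Iic (-(α * Real.sqrt y)), q₂ w) * gammaPDF p y) (Ioi 0) := by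
    have h := hint6.neg
    refine h.congr (Eventually.of_forall fun y => ?_)
    simp [neg_mul]
  have h7 : IntegrableOn (fun y : ℝ =>
      (∫ w in Iic (α * Real.sqrt y), q₂ w) * gammaPDF p y) (Ioi 0) := by
    have h := hint7.neg
    refine h.congr (Eventually.of_forall fun y => ?_)
    simp [neg_mul]
  -- the two Fubini identities
  have key₁ := key_fubini hp hα q₁ hq₁m hq₁i h4 h5
  have key₂ := key_fubini hp hα q₂ hq₂m hq₂i h6 h7
  -- abbreviations
  set A := ∫ w : ℝ, q₁ w with hA
  set B := ∫ w : ℝ, q₂ w with hB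
  set Em := ∫ y in Ioi (0:ℝ), (∫ w in Iic (-(α * Real.sqrt y)), q₁ w) * gammaPDF p y with hEm
  set Ep := ∫ y in Ioi (0:ℝ), (∫ w in Iic (α * Real.sqrt y), q₁ w) * gammaPDF p y with hEp
  set Fm := ∫ y in Ioi (0:ℝ), (∫ w in Iic (-(α * Real.sqrt y)), q₂ w) * gammaPDF p y with hFm
  set Fp := ∫ y in Ioi (0:ℝ), (∫ w in Iic (α * Real.sqrt y), q₂ w) * gammaPDF p y with hFp
  -- split the mixed integrals
  have hsplit₁ : (∫ w : ℝ, h w * q₁ w) = ρ * A + δ * (Em + A - Ep) := by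
    have hrw : (fun w : ℝ => h w * q₁ w) = fun w => ρ * q₁ w + δ * (T w * q₁ w) := by
      funext w; simp only [hh]; ring
    rw [hrw, integral_add (hq₁i.const_mul ρ) ((Tq_integrable hp hα hq₁m hq₁i).const_mul δ),
      integral_const_mul _, integral_const_mul _, key₁]
  have hsplit₂ : (∫ w : ℝ, h w * q₂ w) = ρ * B + δ * (Fm + B - Fp) := by
    have hrw : (fun w : ℝ => h w * q₂ w) = fun w => ρ * q₂ w + δ * (T w * q₂ w) := by
      funext w; simp only [hh]; ring
    rw [hrw, integral_add (hq₂i.const_mul ρ) ((Tq_integrable hp hα hq₂m hq₂i).const_mul δ),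
      integral_const_mul _, integral_const_mul _, key₂]
  -- pointwise decomposition of f log f
  set Φ : ℝ → ℝ := fun w => (1 / Z) * (h w * q₁ w) + (1 / Z) * (h w * q₂ w)
    - (Real.log Z / Z) * (h w * g w) with hΦ
  have hpt : ∀ x : ℝ, tdPDF p μ σ α ρ δ g x * Real.log (tdPDF p μ σ α ρ δ g x)
      = Φ ((x - μ) / σ) := by
    intro x
    set w := (x - μ) / σ with hw
    have htd : tdPDF p μ σ α ρ δ g x = (1 / Z) * h w * g w := rfl
    rw [htd, hΦ]
    simp only
    by_cases hgw : g w = 0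
    · simp [hgw, hq₁, hq₂]
    · by_cases hhw : h w = 0
      · simp [hhw, hq₁, hq₂]
      · have hgw' : 0 < g w := lt_of_le_of_ne (hg0 w) (Ne.symm hgw)
        have hhw' : 0 < h w := lt_of_le_of_ne (h_nonneg hp hρ hδ α w) (Ne.symm hhw)
        rw [Real.log_mul (by positivity) hgw, Real.log_mul (by positivity) hhw,
          Real.log_div one_ne_zero hZ0, Real.log_one]
        simp only [hq₁, hq₂]
        ring
  -- change of variables
  have hcov : (∫ x : ℝ, Φ ((x - μ) / σ)) = σ * ∫ w : ℝ, Φ w := by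
    have h1 : (∫ x : ℝ, Φ ((x - μ) / σ)) = ∫ x : ℝ, (fun t => Φ (t / σ)) (x - μ) := rfl
    rw [h1, integral_sub_right_eq_self (fun t => Φ (t / σ)) μ,
      MeasureTheory.Measure.integral_comp_div Φ σ, smul_eq_mul, abs_of_pos hσ]
  -- compute the integral of Φ
  have hΦint : (∫ w : ℝ, Φ w) = (1 / Z) * (ρ * A + δ * (Em + A - Ep))
      + (1 / Z) * (ρ * B + δ * (Fm + B - Fp)) - (Real.log Z / Z) * (Z / σ) := by
    have i1 : Integrable (fun w : ℝ => (1 / Z) * (h w * q₁ w)) := hhq₁i.const_mul _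
    have i2 : Integrable (fun w : ℝ => (1 / Z) * (h w * q₂ w)) := hhq₂i.const_mul _
    have i12 : Integrable (fun w : ℝ => (1 / Z) * (h w * q₁ w) + (1 / Z) * (h w * q₂ w)) :=
      i1.add i2
    have i3 : Integrable (fun w : ℝ => (Real.log Z / Z) * (h w * g w)) := hhgi.const_mul _
    simp only [hΦ]
    rw [integral_sub i12 i3, integral_add i1 i2,
      integral_const_mul _, integral_const_mul _, integral_const_mul _,
      hsplit₁, hsplit₂, hIZ]
  -- rewrite goal
  have hLHS : (∫ x : ℝ, tdPDF p μ σ α ρ δ g x * Real.log (tdPDF p μ σ α ρ δ g x))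
      = σ * ∫ w : ℝ, Φ w := by
    rw [← hcov]
    exact integral_congr_ae (Eventually.of_forall hpt)
  rw [hLHS, hΦint]
  simp only [neg_mul]
  rw [integral_neg, integral_neg, ← hEm, ← hFm, ← hFp]
  field_simp
  ring
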